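/- Let H_n be the class of Boolean functions h : {0,1}^{2^n−1} → {0,1} computable by a full binary decision tree of depth n in which the 2^n − 1 internal nodes query 2^n − 1 pairwise distinct variables and which depends on all 2^n − 1 variables. Then for every Boolean function f with decision tree complexity D(f) ≤ n, there exists h ∈ H_n such that EC(f) ≤ EC(h). -/

import Mathlib

/-- A gate in a Boolean circuit over the standard basis `{∨₂, ∧₂, ¬}`:
input gates labelled by variables, constant gates, and `∧`/`∨`/`¬` gates
whose arguments are (indices of) earlier gates. -/
inductive Gate (n : ℕ) : Type where
  | input : Fin n → Gate n
  | const : Bool → Gate n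
  | and : ℕ → ℕ → Gate n
  | or : ℕ → ℕ → Gate n
  | not : ℕ → Gate n
deriving DecidableEq

/-- The indices of the incoming gates of a gate. -/
def Gate.deps {n : ℕ} : Gate n → List ℕ
  | .and a b => [a, b]
  | .or a b => [a, b]
  | .not a => [a]
  | _ => []

/-- Inner gates are the non-input (and non-constant) gates, i.e. `∧`, `∨`, `¬` gates. -/
def Gate.isInner {n : ℕ} : Gate n → Bool
  | .and _ _ => true
  | .or _ _ => true
  | .not _ => true
  | _ => false

/-- A Boolean circuit over the standard basis on `n` input variables: a sequence of
gates (topologically sorted, so each gate only takes earlier gates as inputs,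
which makes the underlying graph acyclic) together with a designated output gate. -/
structure Circuit (n : ℕ) : Type where
  size : ℕ
  gates : Fin size → Gate n
  out : Fin size
  wf : ∀ i : Fin size, ∀ j ∈ (gates i).deps, j < (i : ℕ)

/-- The Boolean value of gate `i` of circuit `C` under input `x`. -/
def Circuit.evalGate {n : ℕ} (C : Circuit n) (x : Fin n → Bool) (i : ℕ) (h : i < C.size) :
    Bool :=
  match hg : C.gates ⟨i, h⟩ with
  | .input j => x j
  | .const b => b
  | .not a =>
      have ha : a < i := C.wf ⟨i, h⟩ a (by rw [hg]; simp [Gate.deps])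
      ! C.evalGate x a (ha.trans h)
  | .and a b =>
      have ha : a < i := C.wf ⟨i, h⟩ a (by rw [hg]; simp [Gate.deps])
      have hb : b < i := C.wf ⟨i, h⟩ b (by rw [hg]; simp [Gate.deps])
      C.evalGate x a (ha.trans h) && C.evalGate x b (hb.trans h)
  | .or a b =>
      have ha : a < i := C.wf ⟨i, h⟩ a (by rw [hg]; simp [Gate.deps])
      have hb : b < i := C.wf ⟨i, h⟩ b (by rw [hg]; simp [Gate.deps])
      C.evalGate x a (ha.trans h) || C.evalGate x b (hb.trans h)
termination_by i

/-- The output of circuit `C` on input `x`. -/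
def Circuit.output {n : ℕ} (C : Circuit n) (x : Fin n → Bool) : Bool :=
  C.evalGate x C.out C.out.isLt

/-- `C` computes the Boolean function `f`. -/
def Circuit.Computes {n : ℕ} (C : Circuit n) (f : (Fin n → Bool) → Bool) : Prop :=
  ∀ x, C.output x = f x

/-- The number of activated inner gates of `C` under input `x`. -/
def Circuit.energyAt {n : ℕ} (C : Circuit n) (x : Fin n → Bool) : ℕ :=
  (Finset.univ.filter fun i : Fin C.size =>
    (C.gates i).isInner = true ∧ C.evalGate x i i.isLt = true).card

/-- The energy complexity `EC(C)` of a circuit `C`: the maximum number of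
activated inner gates over all inputs. -/
def Circuit.energy {n : ℕ} (C : Circuit n) : ℕ :=
  Finset.univ.sup fun x : Fin n → Bool => C.energyAt x

/-- The energy complexity `EC(f)` of a Boolean function `f`: the minimum of `EC(C)`
over all circuits `C` computing `f`. -/
noncomputable def EC {n : ℕ} (f : (Fin n → Bool) → Bool) : ℕ :=
  sInf {k | ∃ C : Circuit n, C.Computes f ∧ C.energy = k}

/-- A deterministic decision tree on `n` Boolean variables: internal nodes query a
variable (left child on `0`, right child on `1`) and leaves are labelled `0`/`1`. -/
inductive DTree (n : ℕ) : Type where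
  | leaf : Bool → DTree n
  | node : Fin n → DTree n → DTree n → DTree n

/-- Evaluation of a decision tree on an input. -/
def DTree.eval {n : ℕ} : DTree n → (Fin n → Bool) → Bool
  | .leaf b, _ => b
  | .node i t0 t1, x => if x i then t1.eval x else t0.eval x

/-- The depth of a decision tree (number of queries on a worst-case input). -/
def DTree.depth {n : ℕ} : DTree n → ℕ
  | .leaf _ => 0
  | .node _ t0 t1 => max t0.depth t1.depth + 1

/-- The decision tree complexity `D(f)`: the minimum depth of a decision tree
computing `f`. -/
noncomputable def Dcomp {n : ℕ} (f : (Fin n → Bool) → Bool) : ℕ :=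
  sInf {k | ∃ T : DTree n, (∀ x, T.eval x = f x) ∧ T.depth = k}

/-- `T` is a full (perfect) binary decision tree of depth `d`. -/
inductive DTree.Perfect {m : ℕ} : ℕ → DTree m → Prop where
  | leaf (b : Bool) : DTree.Perfect 0 (.leaf b)
  | node {d : ℕ} (i : Fin m) {t0 t1 : DTree m} :
      DTree.Perfect d t0 → DTree.Perfect d t1 → DTree.Perfect (d + 1) (.node i t0 t1)

/-- The list of variables queried at the internal nodes of a decision tree. -/
def DTree.queries {m : ℕ} : DTree m → List (Fin m)
  | .leaf _ => []
  | .node i t0 t1 => i :: (t0.queries ++ t1.queries)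

/-- Membership in the class `H_n`: Boolean functions `h : {0,1}^{2^n − 1} → {0,1}`
computable by a full binary decision tree of depth `n` whose `2^n − 1` internal nodes
query pairwise distinct variables, and which depend on all `2^n − 1` variables. -/
def MemH (n : ℕ) (h : (Fin (2 ^ n - 1) → Bool) → Bool) : Prop :=
  (∃ T : DTree (2 ^ n - 1), T.Perfect n ∧ T.queries.Nodup ∧ ∀ x, T.eval x = h x) ∧
  ∀ i : Fin (2 ^ n - 1), ∃ x : Fin (2 ^ n - 1) → Bool,
    h (Function.update x i (!x i)) ≠ h x


namespace Stmt18

open DTree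

/-! ### Tree basics -/

theorem eval_congr {m : ℕ} (t : DTree m) {x y : Fin m → Bool}
    (h : ∀ i ∈ t.queries, x i = y i) : t.eval x = t.eval y := by
  induction t with
  | leaf b => rfl
  | node i t0 t1 ih0 ih1 =>
      have hx : x i = y i := h i (by simp [DTree.queries])
      simp only [DTree.eval, hx]
      by_cases hy : y i
      · simp [hy]; exact ih1 fun j hj => h j (by simp [DTree.queries, hj])
      · simp [hy]; exact ih0 fun j hj => h j (by simp [DTree.queries, hj])

/-- a big tree querying all variables in the list -/
def treeOf {m : ℕ} : List (Fin m) → ((Fin m → Bool) → Bool) → DTree m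
  | [], g => .leaf (g fun _ => false)
  | i :: l, g => .node i (treeOf l fun x => g (Function.update x i false))
      (treeOf l fun x => g (Function.update x i true))

theorem treeOf_eval {m : ℕ} (l : List (Fin m)) (g : (Fin m → Bool) → Bool)
    (x : Fin m → Bool) :
    (treeOf l g).eval x = g (fun j => if j ∈ l then x j else false) := by
  induction l generalizing g with
  | nil => simp [treeOf, DTree.eval]
  | cons i l ih =>
      simp only [treeOf, DTree.eval]
      cases hx : x i <;>
      · simp only [ih, if_true, if_false, Bool.false_eq_true, Bool.true_eq_false, ite_true,
          ite_false]
        congr 1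
        funext j
        by_cases hj : j = i
        · subst hj; simp [Function.update, hx]
        · simp [Function.update, hj, List.mem_cons, hj]

theorem treeOf_depth {m : ℕ} (l : List (Fin m)) (g : (Fin m → Bool) → Bool) :
    (treeOf l g).depth = l.length := by
  induction l generalizing g with
  | nil => rfl
  | cons i l ih => simp [treeOf, DTree.depth, ih]

theorem exists_tree {m : ℕ} (f : (Fin m → Bool) → Bool) :
    ∃ T : DTree m, (∀ x, T.eval x = f x) ∧ T.depth = m := by
  refine ⟨treeOf (List.finRange m) f, fun x => ?_, by simp [treeOf_depth]⟩
  rw [treeOf_eval]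
  congr 1
  funext j
  simp [List.mem_finRange]


/-! ### Pruning -/

def hasLeaf {m : ℕ} : DTree m → Bool → Prop
  | .leaf b, c => b = c
  | .node _ t0 t1, c => hasLeaf t0 c ∨ hasLeaf t1 c

/-- `Good t`: every internal node has two leaves with distinct labels beneath it. -/
def Good {m : ℕ} : DTree m → Prop
  | .leaf _ => True
  | .node _ t0 t1 => Good t0 ∧ Good t1 ∧
      (hasLeaf t0 true ∨ hasLeaf t1 true) ∧ (hasLeaf t0 false ∨ hasLeaf t1 false)

def smash {m : ℕ} (i : Fin m) : DTree m → DTree m → DTree m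
  | .leaf b0, .leaf b1 => if b0 = b1 then .leaf b0 else .node i (.leaf b0) (.leaf b1)
  | t0, t1 => .node i t0 t1

def prune {m : ℕ} : DTree m → DTree m
  | .leaf b => .leaf b
  | .node i t0 t1 => smash i (prune t0) (prune t1)

theorem smash_eval {m : ℕ} (i : Fin m) (t0 t1 : DTree m) (x : Fin m → Bool) :
    (smash i t0 t1).eval x = (DTree.node i t0 t1).eval x := by
  cases t0 with
  | leaf b0 =>
    cases t1 with
    | leaf b1 =>
        simp only [smash]
        split
        · next hb => subst hb; simp [DTree.eval]
        · rfl
    | node j s0 s1 => rfl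
  | node j s0 s1 => cases t1 <;> rfl

theorem smash_depth {m : ℕ} (i : Fin m) (t0 t1 : DTree m) :
    (smash i t0 t1).depth ≤ (DTree.node i t0 t1).depth := by
  cases t0 with
  | leaf b0 =>
    cases t1 with
    | leaf b1 =>
        simp only [smash]
        split
        · simp [DTree.depth]
        · exact le_refl _
    | node j s0 s1 => exact le_refl _
  | node j s0 s1 => cases t1 <;> exact le_refl _

theorem good_both {m : ℕ} {t : DTree m} (hg : Good t) (ht : ∀ b, t ≠ .leaf b) :
    hasLeaf t true ∧ hasLeaf t false := by
  cases t with
  | leaf b => exact absurd rfl (ht b)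
  | node i t0 t1 => exact ⟨hg.2.2.1, hg.2.2.2⟩

theorem smash_good {m : ℕ} (i : Fin m) (t0 t1 : DTree m) (h0 : Good t0) (h1 : Good t1) :
    Good (smash i t0 t1) := by
  cases t0 with
  | leaf b0 =>
    cases t1 with
    | leaf b1 =>
        simp only [smash]
        split
        · trivial
        · next hb =>
            refine ⟨trivial, trivial, ?_, ?_⟩ <;>
            · cases b0 <;> cases b1 <;> simp_all [hasLeaf]
    | node j s0 s1 =>
        have := good_both h1 (by intro b h; cases h)
        exact ⟨h0, h1, Or.inr this.1, Or.inr this.2⟩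
  | node j s0 s1 =>
    have h00 := good_both h0 (by intro b h; cases h)
    cases t1 <;> exact ⟨h0, h1, Or.inl h00.1, Or.inl h00.2⟩

theorem prune_eval {m : ℕ} (t : DTree m) (x : Fin m → Bool) :
    (prune t).eval x = t.eval x := by
  induction t with
  | leaf b => rfl
  | node i t0 t1 ih0 ih1 =>
      rw [prune, smash_eval]
      simp only [DTree.eval, ih0, ih1]

theorem prune_depth {m : ℕ} (t : DTree m) : (prune t).depth ≤ t.depth := by
  induction t with
  | leaf b => exact le_refl _
  | node i t0 t1 ih0 ih1 =>
      refine (smash_depth i _ _).trans ?_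
      simp only [DTree.depth]
      omega

theorem prune_good {m : ℕ} (t : DTree m) : Good (prune t) := by
  induction t with
  | leaf b => trivial
  | node i t0 t1 ih0 ih1 => exact smash_good i _ _ ih0 ih1

/-! ### The padded perfect tree construction -/

def headVal {m : ℕ} : DTree m → Bool
  | .leaf b => b
  | .node _ _ _ => false

def childL {m : ℕ} : DTree m → DTree m
  | .leaf b => .leaf b
  | .node _ t0 _ => t0

def childR {m : ℕ} : DTree m → DTree m
  | .leaf b => .leaf (!b)
  | .node _ _ t1 => t1

def mk (n : ℕ) {m : ℕ} : ℕ → ℕ → DTree m → DTree (2 ^ n - 1)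
  | 0, _, t => .leaf (headVal t)
  | d+1, v, t =>
    if h : v < 2 ^ n - 1 then
      .node ⟨v, h⟩ (mk n d (2*v+1) (childL t)) (mk n d (2*v+2) (childR t))
    else .leaf false

def Inv (n d v : ℕ) : Prop := d ≤ n ∧ v + 2 ≤ 2 ^ (n - d + 1)

theorem inv_lt {n d v : ℕ} (h : Inv n (d+1) v) : v < 2 ^ n - 1 := by
  obtain ⟨h1, h2⟩ := h
  have h3 : 2 ^ (n - (d+1) + 1) ≤ 2 ^ n := Nat.pow_le_pow_right (by norm_num) (by omega)
  have h4 : 1 ≤ 2 ^ n := Nat.one_le_two_pow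
  omega

theorem inv_child {n d v : ℕ} (h : Inv n (d+1) v) :
    Inv n d (2*v+1) ∧ Inv n d (2*v+2) := by
  obtain ⟨h1, h2⟩ := h
  have e : n - (d+1) + 1 = n - d := by omega
  have e2 : 2 ^ (n - d + 1) = 2 ^ (n - d) * 2 := pow_succ 2 _
  rw [e] at h2
  exact ⟨⟨by omega, by omega⟩, ⟨by omega, by omega⟩⟩

theorem mk_perfect {n m : ℕ} : ∀ d v (t : DTree m), Inv n d v →
    (mk n d v t).Perfect d
  | 0, v, t, _ => DTree.Perfect.leaf _
  | d+1, v, t, h => by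
      rw [mk, dif_pos (inv_lt h)]
      exact DTree.Perfect.node _ (mk_perfect d _ _ (inv_child h).1)
        (mk_perfect d _ _ (inv_child h).2)

theorem mem_mk_queries {n m : ℕ} : ∀ d v (t : DTree m), Inv n d v →
    ∀ j ∈ (mk n d v t).queries,
      ∃ r < d, 2 ^ r * (v + 1) ≤ (j : ℕ) + 1 ∧ (j : ℕ) + 1 < 2 ^ r * (v + 2)
  | 0, v, t, _, j, hj => by simp [mk, DTree.queries] at hj
  | d+1, v, t, h, j, hj => by
      rw [mk, dif_pos (inv_lt h)] at hj
      simp only [DTree.queries, List.mem_cons, List.mem_append] at hj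
      rcases hj with hj | hj | hj
      · subst hj
        exact ⟨0, by omega, by simp⟩
      · obtain ⟨r, hr, h1, h2⟩ := mem_mk_queries d _ _ (inv_child h).1 j hj
        refine ⟨r + 1, by omega, ?_, ?_⟩
        · calc 2 ^ (r+1) * (v+1) = 2 ^ r * (2*v+1+1) := by ring
            _ ≤ (j : ℕ) + 1 := h1
        · calc (j : ℕ) + 1 < 2 ^ r * (2*v+1+2) := h2
            _ ≤ 2 ^ r * (2*v+4) := Nat.mul_le_mul_left _ (by omega)
            _ = 2 ^ (r+1) * (v+2) := by ring
      · obtain ⟨r, hr, h1, h2⟩ := mem_mk_queries d _ _ (inv_child h).2 j hj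
        refine ⟨r + 1, by omega, ?_, ?_⟩
        · calc 2 ^ (r+1) * (v+1) = 2 ^ r * (2*v+2) := by ring
            _ ≤ 2 ^ r * (2*v+2+1) := Nat.mul_le_mul_left _ (by omega)
            _ ≤ (j : ℕ) + 1 := h1
        · calc (j : ℕ) + 1 < 2 ^ r * (2*v+2+2) := h2
            _ = 2 ^ (r+1) * (v+2) := by ring
      termination_by d => d

theorem mem_mk_ge {n m : ℕ} {d v : ℕ} {t : DTree m} (h : Inv n d v)
    {j : Fin (2 ^ n - 1)} (hj : j ∈ (mk n d v t).queries) : v ≤ (j : ℕ) := by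
  obtain ⟨r, _, h1, _⟩ := mem_mk_queries d v t h j hj
  have : v + 1 ≤ 2 ^ r * (v + 1) := Nat.le_mul_of_pos_left _ (Nat.two_pow_pos r)
  omega

theorem prefix_free {v r r' x : ℕ} (h1 : 2^r*(2*v+2) ≤ x) (h2 : x < 2^r*(2*v+3))
    (h3 : 2^r'*(2*v+3) ≤ x) (h4 : x < 2^r'*(2*v+4)) : False := by
  have d1 : x / 2 ^ r = 2*v+2 :=
    Nat.div_eq_of_lt_le (by linarith [h1]) (by calc x < 2^r*(2*v+3) := h2
      _ = (2*v+2+1) * 2^r := by ring)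
  have d2 : x / 2 ^ r' = 2*v+3 :=
    Nat.div_eq_of_lt_le (by linarith [h3]) (by calc x < 2^r'*(2*v+4) := h4
      _ = (2*v+3+1) * 2^r' := by ring)
  rcases le_total r r' with hle | hle
  · obtain ⟨s, rfl⟩ := Nat.exists_eq_add_of_le hle
    have e : x / 2 ^ (r + s) = (x / 2 ^ r) / 2 ^ s := by
      rw [Nat.div_div_eq_div_mul, ← pow_add]
    rw [e, d1] at d2
    rcases Nat.eq_zero_or_pos s with rfl | hs
    · simp only [pow_zero, Nat.div_one] at d2; omega
    · have : (2*v+2) / 2 ^ s ≤ (2*v+2) / 2 ^ 1 :=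
        Nat.div_le_div_left (Nat.pow_le_pow_right (by norm_num) hs) (by norm_num)
      simp only [pow_one] at this
      omega
  · obtain ⟨s, rfl⟩ := Nat.exists_eq_add_of_le hle
    have e : x / 2 ^ (r' + s) = (x / 2 ^ r') / 2 ^ s := by
      rw [Nat.div_div_eq_div_mul, ← pow_add]
    rw [e, d2] at d1
    rcases Nat.eq_zero_or_pos s with rfl | hs
    · simp only [pow_zero, Nat.div_one] at d1; omega
    · have : (2*v+3) / 2 ^ s ≤ (2*v+3) / 2 ^ 1 :=
        Nat.div_le_div_left (Nat.pow_le_pow_right (by norm_num) hs) (by norm_num)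
      simp only [pow_one] at this
      omega

theorem nodup_mk {n m : ℕ} : ∀ d v (t : DTree m), Inv n d v →
    (mk n d v t).queries.Nodup
  | 0, v, t, _ => by simp [mk, DTree.queries]
  | d+1, v, t, h => by
      rw [mk, dif_pos (inv_lt h)]
      simp only [DTree.queries, List.nodup_cons, List.mem_append]
      constructor
      · rintro (hj | hj)
        · have := mem_mk_ge (inv_child h).1 hj; simp at this; omega
        · have := mem_mk_ge (inv_child h).2 hj; simp at this; omega
      · refine List.Nodup.append (nodup_mk d _ _ (inv_child h).1)
          (nodup_mk d _ _ (inv_child h).2) ?_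
        intro j hjL hjR
        obtain ⟨r, _, h1, h2⟩ := mem_mk_queries d _ _ (inv_child h).1 j hjL
        obtain ⟨r', _, h3, h4⟩ := mem_mk_queries d _ _ (inv_child h).2 j hjR
        exact prefix_free (x := (j : ℕ) + 1)
          (by calc 2^r*(2*v+2) = 2^r*(2*v+1+1) := by ring
            _ ≤ _ := h1)
          (by calc ((j:ℕ)+1) < 2^r*(2*v+1+2) := h2
            _ = 2^r*(2*v+3) := by ring)
          (by calc 2^r'*(2*v+3) = 2^r'*(2*v+2+1) := by ring
            _ ≤ _ := h3)
          (by calc ((j:ℕ)+1) < 2^r'*(2*v+2+2) := h4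
            _ = 2^r'*(2*v+4) := by ring)
      termination_by d => d

/-! ### Navigating the original tree by heap index -/

def navigate {m : ℕ} (T : DTree m) : ℕ → DTree m
  | 0 => T
  | j+1 =>
    match navigate T (j/2) with
    | .leaf b => .leaf b
    | .node _ t0 t1 => if j % 2 = 1 then t1 else t0
  decreasing_by exact Nat.lt_succ_of_le (Nat.div_le_self _ _)

theorem navigate_zero {m : ℕ} (T : DTree m) : navigate T 0 = T := by
  rw [navigate]

theorem navigate_left {m : ℕ} (T : DTree m) (v : ℕ) :
    navigate T (2*v+1) =
      match navigate T v with
      | .leaf b => .leaf b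
      | .node _ t0 _ => t0 := by
  show navigate T (2*v+1) = _
  rw [navigate]
  have e1 : 2 * v / 2 = v := by omega
  have e2 : ¬ (2 * v % 2 = 1) := by omega
  rw [e1]
  cases navigate T v with
  | leaf b => rfl
  | node i t0 t1 => simp [e2]

theorem navigate_right {m : ℕ} (T : DTree m) (v : ℕ) :
    navigate T (2*v+2) =
      match navigate T v with
      | .leaf b => .leaf b
      | .node _ _ t1 => t1 := by
  have e0 : 2*v+2 = (2*v+1)+1 := by omega
  rw [e0, navigate]
  have e1 : (2 * v + 1) / 2 = v := by omega
  have e2 : (2 * v + 1) % 2 = 1 := by omega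
  rw [e1]
  cases navigate T v with
  | leaf b => rfl
  | node i t0 t1 => simp [e2]

/-- the substitution sending an input `x` of `f` to the corresponding input of `h` -/
def pii {m : ℕ} (T : DTree m) (n : ℕ) (x : Fin m → Bool) (j : Fin (2 ^ n - 1)) : Bool :=
  match navigate T (j : ℕ) with
  | .node i _ _ => x i
  | .leaf _ => false

theorem mk_eval {n m : ℕ} (T : DTree m) (x : Fin m → Bool) :
    ∀ d v (t : DTree m), Inv n d v → navigate T v = t → t.depth ≤ d →
      (mk n d v t).eval (pii T n x) = t.eval x
  | 0, v, t, _, hnav, hdep => by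
      cases t with
      | leaf b => rfl
      | node i t0 t1 => simp [DTree.depth] at hdep
  | d+1, v, t, h, hnav, hdep => by
      rw [mk, dif_pos (inv_lt h)]
      cases t with
      | leaf b =>
          have hpv : pii T n x ⟨v, inv_lt h⟩ = false := by
            simp only [pii, hnav]
          simp only [DTree.eval, hpv, Bool.false_eq_true, if_false]
          have hnavL : navigate T (2*v+1) = .leaf b := by
            rw [navigate_left, hnav]
          exact mk_eval T x d (2*v+1) (childL (.leaf b)) (inv_child h).1 hnavL
            (by simp [childL, DTree.depth])
      | node i t0 t1 =>
          have hpv : pii T n x ⟨v, inv_lt h⟩ = x i := by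
            simp only [pii, hnav]
          simp only [DTree.eval, hpv]
          have hnavL : navigate T (2*v+1) = t0 := by rw [navigate_left, hnav]
          have hnavR : navigate T (2*v+2) = t1 := by rw [navigate_right, hnav]
          have hd : t0.depth ≤ d ∧ t1.depth ≤ d := by
            simp [DTree.depth] at hdep; omega
          rw [mk_eval T x d (2*v+1) (childL (.node i t0 t1)) (inv_child h).1 hnavL hd.1,
            mk_eval T x d (2*v+2) (childR (.node i t0 t1)) (inv_child h).2 hnavR hd.2]
          rfl
  termination_by d => d

/-! ### Dependence on all variables -/

theorem eval_update_not_mem {N : ℕ} (t : DTree N) (y : Fin N → Bool) {j : Fin N}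
    (c : Bool) (hj : j ∉ t.queries) :
    t.eval (Function.update y j c) = t.eval y :=
  eval_congr t fun k hk => Function.update_of_ne (by rintro rfl; exact hj hk) _ _

theorem mk_const {n m : ℕ} (b : Bool) : ∀ d v, Inv n d v →
    (mk n d v (.leaf b : DTree m)).eval (fun _ => false) = b
  | 0, v, _ => rfl
  | d+1, v, h => by
      rw [mk, dif_pos (inv_lt h)]
      simp only [DTree.eval, Bool.false_eq_true, if_false]
      exact mk_const b d (2*v+1) (inv_child h).1

theorem mk_attain {n m : ℕ} (b : Bool) : ∀ (t : DTree m) (d v : ℕ), Inv n d v →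
    t.depth ≤ d → hasLeaf t b → ∃ y, (mk n d v t).eval y = b := by
  intro t
  induction t with
  | leaf b' =>
      intro d v h _ hl
      have hb : b' = b := hl
      subst hb
      exact ⟨fun _ => false, mk_const b' d v h⟩
  | node i t0 t1 ih0 ih1 =>
      intro d v h hdep hl
      cases d with
      | zero => simp [DTree.depth] at hdep
      | succ d =>
          have hvlt := inv_lt h
          have hd : t0.depth ≤ d ∧ t1.depth ≤ d := by simp [DTree.depth] at hdep; omega
          rcases hl with hl | hl
          · obtain ⟨y, hy⟩ := ih0 d (2*v+1) (inv_child h).1 hd.1 hl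
            refine ⟨Function.update y ⟨v, hvlt⟩ false, ?_⟩
            rw [mk, dif_pos hvlt]
            simp only [DTree.eval, Function.update_self, Bool.false_eq_true, if_false]
            rw [eval_update_not_mem _ _ _ (fun hmem => by
              have := mem_mk_ge (inv_child h).1 hmem; simp at this; omega)]
            exact hy
          · obtain ⟨y, hy⟩ := ih1 d (2*v+2) (inv_child h).2 hd.2 hl
            refine ⟨Function.update y ⟨v, hvlt⟩ true, ?_⟩
            rw [mk, dif_pos hvlt]
            simp only [DTree.eval, Function.update_self, if_true]
            rw [eval_update_not_mem _ _ _ (fun hmem => by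
              have := mem_mk_ge (inv_child h).2 hmem; simp at this; omega)]
            exact hy

theorem mk_LR_disjoint {n m : ℕ} {d v : ℕ} {tL tR : DTree m}
    (hL : Inv n d (2*v+1)) (hR : Inv n d (2*v+2)) {j : Fin (2 ^ n - 1)}
    (hjL : j ∈ (mk n d (2*v+1) tL).queries) (hjR : j ∈ (mk n d (2*v+2) tR).queries) :
    False := by
  obtain ⟨r, _, h1, h2⟩ := mem_mk_queries d _ _ hL j hjL
  obtain ⟨r', _, h3, h4⟩ := mem_mk_queries d _ _ hR j hjR
  exact prefix_free (x := (j : ℕ) + 1)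
    (by calc 2^r*(2*v+2) = 2^r*(2*v+1+1) := by ring
      _ ≤ _ := h1)
    (by calc ((j:ℕ)+1) < 2^r*(2*v+1+2) := h2
      _ = 2^r*(2*v+3) := by ring)
    (by calc 2^r'*(2*v+3) = 2^r'*(2*v+2+1) := by ring
      _ ≤ _ := h3)
    (by calc ((j:ℕ)+1) < 2^r'*(2*v+2+2) := h4
      _ = 2^r'*(2*v+4) := by ring)

theorem mk_dep {n m : ℕ} : ∀ d v (t : DTree m), Inv n d v → t.depth ≤ d → Good t →
    ∀ j ∈ (mk n d v t).queries,
      ∃ y, (mk n d v t).eval (Function.update y j (!y j)) ≠ (mk n d v t).eval y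
  | 0, v, t, _, _, _, j, hj => by simp [mk, DTree.queries] at hj
  | d+1, v, t, h, hdep, hg, j, hj => by
      have hvlt := inv_lt h
      have hInvL := (inv_child h).1
      have hInvR := (inv_child h).2
      set L := mk n d (2*v+1) (childL t) with hLdef
      set R := mk n d (2*v+2) (childR t) with hRdef
      have hvL : (⟨v, hvlt⟩ : Fin (2^n-1)) ∉ L.queries := fun hmem => by
        have := mem_mk_ge hInvL hmem; simp at this; omega
      have hvR : (⟨v, hvlt⟩ : Fin (2^n-1)) ∉ R.queries := fun hmem => by
        have := mem_mk_ge hInvR hmem; simp at this; omega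
      rw [mk, dif_pos hvlt] at hj ⊢
      simp only [DTree.queries, List.mem_cons, List.mem_append] at hj
      rcases hj with hj | hj | hj
      · -- j is the root variable
        subst hj
        have key : ∃ a yl yr, L.eval yl = a ∧ R.eval yr = (!a) := by
          cases t with
          | leaf c =>
              exact ⟨c, fun _ => false, fun _ => false, mk_const c d (2*v+1) hInvL,
                mk_const (!c) d (2*v+2) hInvR⟩
          | node i t0 t1 =>
              obtain ⟨g0, g1, hT, hF⟩ := hg
              have hd : t0.depth ≤ d ∧ t1.depth ≤ d := by
                simp [DTree.depth] at hdep; omega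
              rcases hT with hT | hT <;> rcases hF with hF | hF
              · -- t0 has both values
                set c := R.eval (fun _ => false) with hc
                have hattain : hasLeaf t0 (!c) := by cases c <;> simpa
                obtain ⟨yl, hyl⟩ := mk_attain (!c) t0 d (2*v+1) hInvL hd.1 hattain
                exact ⟨!c, yl, fun _ => false, hyl, by rw [Bool.not_not]⟩
              · obtain ⟨yl, hyl⟩ := mk_attain true t0 d (2*v+1) hInvL hd.1 hT
                obtain ⟨yr, hyr⟩ := mk_attain false t1 d (2*v+2) hInvR hd.2 hF
                exact ⟨true, yl, yr, hyl, hyr⟩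
              · obtain ⟨yl, hyl⟩ := mk_attain false t0 d (2*v+1) hInvL hd.1 hF
                obtain ⟨yr, hyr⟩ := mk_attain true t1 d (2*v+2) hInvR hd.2 hT
                exact ⟨false, yl, yr, hyl, hyr⟩
              · -- t1 has both values
                set c := L.eval (fun _ => false) with hc
                have hattain : hasLeaf t1 (!c) := by cases c <;> simpa
                obtain ⟨yr, hyr⟩ := mk_attain (!c) t1 d (2*v+2) hInvR hd.2 hattain
                exact ⟨c, fun _ => false, yr, rfl, hyr⟩
        obtain ⟨a, yl, yr, hyl, hyr⟩ := key
        set y : Fin (2^n-1) → Bool := fun k => if k ∈ L.queries then yl k else yr k with hy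
        refine ⟨Function.update y ⟨v, hvlt⟩ false, ?_⟩
        have e0 : Function.update y ⟨v, hvlt⟩ false ⟨v, hvlt⟩ = false :=
          Function.update_self _ _ _
        rw [e0]
        have e1 : Function.update (Function.update y ⟨v, hvlt⟩ false) ⟨v, hvlt⟩ (!false)
            = Function.update y ⟨v, hvlt⟩ true := by
          rw [Function.update_idem]; rfl
        rw [e1]
        have eR : (DTree.node ⟨v, hvlt⟩ L R).eval (Function.update y ⟨v, hvlt⟩ true)
            = R.eval yr := by
          simp only [DTree.eval, Function.update_self, if_true]
          rw [eval_update_not_mem _ _ _ hvR]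
          exact eval_congr R fun k hk => by
            have : k ∉ L.queries := fun hkL => mk_LR_disjoint hInvL hInvR hkL hk
            simp [hy, this]
        have eL : (DTree.node ⟨v, hvlt⟩ L R).eval (Function.update y ⟨v, hvlt⟩ false)
            = L.eval yl := by
          simp only [DTree.eval, Function.update_self, Bool.false_eq_true, if_false]
          rw [eval_update_not_mem _ _ _ hvL]
          exact eval_congr L fun k hk => by simp [hy, hk]
        rw [eR, eL, hyl, hyr]
        cases a <;> simp
      · -- j in the left subtree
        have hGood : Good (childL t) := by
          cases t with
          | leaf c => trivial
          | node i t0 t1 => exact hg.1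
        have hdepL : (childL t).depth ≤ d := by
          cases t with
          | leaf c => simp [childL, DTree.depth]
          | node i t0 t1 => simp [childL, DTree.depth] at hdep ⊢; omega
        obtain ⟨y, hy⟩ := mk_dep d (2*v+1) (childL t) hInvL hdepL hGood j hj
        have hjv : j ≠ ⟨v, hvlt⟩ := by
          intro hjv
          have := mem_mk_ge hInvL hj
          rw [hjv] at this; simp at this; omega
        refine ⟨Function.update y ⟨v, hvlt⟩ false, ?_⟩
        set y0 := Function.update y ⟨v, hvlt⟩ false with hy0
        have ev0 : y0 ⟨v, hvlt⟩ = false := Function.update_self _ _ _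
        have ej : y0 j = y j := Function.update_of_ne hjv _ _
        have eflip : (Function.update y0 j (!y0 j)) ⟨v, hvlt⟩ = false := by
          rw [Function.update_of_ne (Ne.symm hjv), ev0]
        have eR1 : (DTree.node ⟨v, hvlt⟩ L R).eval (Function.update y0 j (!y0 j))
            = L.eval (Function.update y j (!y j)) := by
          simp only [DTree.eval, eflip, Bool.false_eq_true, if_false]
          refine eval_congr L fun k hk => ?_
          by_cases hkj : k = j
          · subst hkj; simp [Function.update_self, ej]
          · rw [Function.update_of_ne hkj, Function.update_of_ne hkj, hy0,
              Function.update_of_ne (by rintro rfl; exact hvL hk)]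
        have eR2 : (DTree.node ⟨v, hvlt⟩ L R).eval y0 = L.eval y := by
          simp only [DTree.eval, ev0, Bool.false_eq_true, if_false]
          exact eval_update_not_mem _ _ _ hvL
        rw [eR1, eR2]
        exact hy
      · -- j in the right subtree
        have hGood : Good (childR t) := by
          cases t with
          | leaf c => trivial
          | node i t0 t1 => exact hg.2.1
        have hdepR : (childR t).depth ≤ d := by
          cases t with
          | leaf c => simp [childR, DTree.depth]
          | node i t0 t1 => simp [childR, DTree.depth] at hdep ⊢; omega
        obtain ⟨y, hy⟩ := mk_dep d (2*v+2) (childR t) hInvR hdepR hGood j hj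
        have hjv : j ≠ ⟨v, hvlt⟩ := by
          intro hjv
          have := mem_mk_ge hInvR hj
          rw [hjv] at this; simp at this; omega
        refine ⟨Function.update y ⟨v, hvlt⟩ true, ?_⟩
        set y0 := Function.update y ⟨v, hvlt⟩ true with hy0
        have ev0 : y0 ⟨v, hvlt⟩ = true := Function.update_self _ _ _
        have ej : y0 j = y j := Function.update_of_ne hjv _ _
        have eflip : (Function.update y0 j (!y0 j)) ⟨v, hvlt⟩ = true := by
          rw [Function.update_of_ne (Ne.symm hjv), ev0]
        have eR1 : (DTree.node ⟨v, hvlt⟩ L R).eval (Function.update y0 j (!y0 j))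
            = R.eval (Function.update y j (!y j)) := by
          simp only [DTree.eval, eflip, if_true]
          refine eval_congr R fun k hk => ?_
          by_cases hkj : k = j
          · subst hkj; simp [Function.update_self, ej]
          · rw [Function.update_of_ne hkj, Function.update_of_ne hkj, hy0,
              Function.update_of_ne (by rintro rfl; exact hvR hk)]
        have eR2 : (DTree.node ⟨v, hvlt⟩ L R).eval y0 = R.eval y := by
          simp only [DTree.eval, ev0, if_true]
          exact eval_update_not_mem _ _ _ hvR
        rw [eR1, eR2]
        exact hy
  termination_by d => d

/-! ### Coverage: a perfect nodup tree queries every variable -/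

theorem perfect_queries_length {N : ℕ} {d : ℕ} {t : DTree N} (h : t.Perfect d) :
    t.queries.length = 2 ^ d - 1 := by
  induction h with
  | leaf b => rfl
  | @node d i t0 t1 h0 h1 ih0 ih1 =>
      simp only [DTree.queries, List.length_cons, List.length_append, ih0, ih1]
      have : 1 ≤ 2 ^ d := Nat.one_le_two_pow
      rw [pow_succ]
      omega

theorem mem_queries_of_perfect {n : ℕ} {t : DTree (2 ^ n - 1)} (hp : t.Perfect n)
    (hnd : t.queries.Nodup) (j : Fin (2 ^ n - 1)) : j ∈ t.queries := by
  have hcard : t.queries.toFinset = Finset.univ := by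
    apply Finset.eq_univ_of_card
    rw [List.toFinset_card_of_nodup hnd, perfect_queries_length hp, Fintype.card_fin]
  rw [← List.mem_toFinset, hcard]
  exact Finset.mem_univ j

/-! ### Circuits: variable substitution -/

def evalGateD {k : ℕ} (C : Circuit k) (x : Fin k → Bool) (a : ℕ) : Bool :=
  if h : a < C.size then C.evalGate x a h else false

theorem evalGateD_eq {k : ℕ} (C : Circuit k) (x : Fin k → Bool) {a : ℕ}
    (h : a < C.size) : evalGateD C x a = C.evalGate x a h := dif_pos h

theorem evalGate_def {k : ℕ} (C : Circuit k) (x : Fin k → Bool) (i : ℕ)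
    (h : i < C.size) :
    C.evalGate x i h =
      match C.gates ⟨i, h⟩ with
      | .input j => x j
      | .const b => b
      | .not a => !(evalGateD C x a)
      | .and a b => evalGateD C x a && evalGateD C x b
      | .or a b => evalGateD C x a || evalGateD C x b := by
  rw [Circuit.evalGate]
  split
  · next j heq => rw [heq]
  · next b heq => rw [heq]
  · next a heq =>
      conv_rhs => rw [heq]
      have ha : a < i := C.wf ⟨i, h⟩ a (by rw [heq]; simp [Gate.deps])
      show (!C.evalGate x a _) = (!evalGateD C x a)
      rw [evalGateD_eq C x (ha.trans h)]
  · next a b heq =>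
      conv_rhs => rw [heq]
      have ha : a < i := C.wf ⟨i, h⟩ a (by rw [heq]; simp [Gate.deps])
      have hb : b < i := C.wf ⟨i, h⟩ b (by rw [heq]; simp [Gate.deps])
      show (C.evalGate x a _ && C.evalGate x b _) = (evalGateD C x a && evalGateD C x b)
      rw [evalGateD_eq C x (ha.trans h), evalGateD_eq C x (hb.trans h)]
  · next a b heq =>
      conv_rhs => rw [heq]
      have ha : a < i := C.wf ⟨i, h⟩ a (by rw [heq]; simp [Gate.deps])
      have hb : b < i := C.wf ⟨i, h⟩ b (by rw [heq]; simp [Gate.deps])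
      show (C.evalGate x a _ || C.evalGate x b _) = (evalGateD C x a || evalGateD C x b)
      rw [evalGateD_eq C x (ha.trans h), evalGateD_eq C x (hb.trans h)]

def gmap {m : ℕ} (T : DTree m) {N : ℕ} : Gate N → Gate m
  | .input j => match navigate T (j : ℕ) with
      | .node i _ _ => .input i
      | .leaf _ => .const false
  | .const b => .const b
  | .and a b => .and a b
  | .or a b => .or a b
  | .not a => .not a

theorem gmap_deps {m N : ℕ} (T : DTree m) (g : Gate N) :
    (gmap T g).deps = g.deps := by
  cases g with
  | input j => cases hnav : navigate T (j : ℕ) <;> simp [gmap, hnav, Gate.deps]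
  | const b => rfl
  | and a b => rfl
  | or a b => rfl
  | not a => rfl

theorem gmap_isInner {m N : ℕ} (T : DTree m) (g : Gate N) :
    (gmap T g).isInner = g.isInner := by
  cases g with
  | input j => cases hnav : navigate T (j : ℕ) <;> simp [gmap, hnav, Gate.isInner]
  | const b => rfl
  | and a b => rfl
  | or a b => rfl
  | not a => rfl

def cpull {m N : ℕ} (C : Circuit N) (T : DTree m) : Circuit m where
  size := C.size
  gates := fun i => gmap T (C.gates i)
  out := C.out
  wf := fun i j hj => C.wf i j (by rwa [gmap_deps] at hj)

theorem evalGate_pull {m n : ℕ} (C : Circuit (2 ^ n - 1)) (T : DTree m)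
    (x : Fin m → Bool) :
    ∀ i (h : i < C.size), (cpull C T).evalGate x i h = C.evalGate (pii T n x) i h := by
  intro i
  induction i using Nat.strong_induction_on with
  | _ i IH =>
    intro h
    have hD : ∀ a, a < i → evalGateD (cpull C T) x a = evalGateD C (pii T n x) a := by
      intro a ha
      by_cases hs : a < C.size
      · rw [show evalGateD (cpull C T) x a = (cpull C T).evalGate x a hs from dif_pos hs,
          evalGateD_eq C _ hs]
        exact IH a ha hs
      · rw [show evalGateD (cpull C T) x a = false from dif_neg hs,
          show evalGateD C (pii T n x) a = false from dif_neg hs]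
    rw [evalGate_def]
    refine (evalGate_def (cpull C T) x i h).trans ?_
    have hg : (cpull C T).gates ⟨i, h⟩ = gmap T (C.gates ⟨i, h⟩) := rfl
    cases hgate : C.gates ⟨i, h⟩ with
    | input j =>
        rw [hg, hgate]
        cases hnav : navigate T (j : ℕ) with
        | leaf b => simp [gmap, hnav, pii]
        | node i' t0 t1 => simp [gmap, hnav, pii]
    | const b => rw [hg, hgate]; rfl
    | not a =>
        have ha : a < i := C.wf ⟨i, h⟩ a (by rw [hgate]; simp [Gate.deps])
        rw [hg, hgate]
        show (!evalGateD (cpull C T) x a) = _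
        rw [hD a ha]
    | and a b =>
        have ha : a < i := C.wf ⟨i, h⟩ a (by rw [hgate]; simp [Gate.deps])
        have hb : b < i := C.wf ⟨i, h⟩ b (by rw [hgate]; simp [Gate.deps])
        rw [hg, hgate]
        show (evalGateD (cpull C T) x a && evalGateD (cpull C T) x b) = _
        rw [hD a ha, hD b hb]
    | or a b =>
        have ha : a < i := C.wf ⟨i, h⟩ a (by rw [hgate]; simp [Gate.deps])
        have hb : b < i := C.wf ⟨i, h⟩ b (by rw [hgate]; simp [Gate.deps])
        rw [hg, hgate]
        show (evalGateD (cpull C T) x a || evalGateD (cpull C T) x b) = _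
        rw [hD a ha, hD b hb]

theorem output_pull {m n : ℕ} (C : Circuit (2 ^ n - 1)) (T : DTree m)
    (x : Fin m → Bool) : (cpull C T).output x = C.output (pii T n x) :=
  evalGate_pull C T x _ _

theorem energyAt_pull {m n : ℕ} (C : Circuit (2 ^ n - 1)) (T : DTree m)
    (x : Fin m → Bool) : (cpull C T).energyAt x = C.energyAt (pii T n x) := by
  unfold Circuit.energyAt
  congr 1
  apply Finset.filter_congr
  intro i _
  rw [show (cpull C T).gates i = gmap T (C.gates i) from rfl, gmap_isInner,
    evalGate_pull C T x i i.isLt]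

theorem energy_pull_le {m n : ℕ} (C : Circuit (2 ^ n - 1)) (T : DTree m) :
    (cpull C T).energy ≤ C.energy := by
  apply Finset.sup_le
  intro x _
  rw [energyAt_pull]
  exact Finset.le_sup (Finset.mem_univ (pii T n x))

/-! ### Compiling a decision tree to a circuit -/

def gshift {k : ℕ} (s : ℕ) : Gate k → Gate k
  | .and a b => .and (s+a) (s+b)
  | .or a b => .or (s+a) (s+b)
  | .not a => .not (s+a)
  | g => g

def lev {k : ℕ} (l : List (Gate k)) (x : Fin k → Bool) : ℕ → Bool
  | i =>
    match l[i]? with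
    | some (.input j) => x j
    | some (.const b) => b
    | some (.not a) => if h : a < i then !(lev l x a) else false
    | some (.and a b) =>
        (if h : a < i then lev l x a else false) && (if h : b < i then lev l x b else false)
    | some (.or a b) =>
        (if h : a < i then lev l x a else false) || (if h : b < i then lev l x b else false)
    | none => false
  termination_by i => i

def wfL {k : ℕ} (l : List (Gate k)) : Prop :=
  ∀ (i : ℕ) (g : Gate k), l[i]? = some g → ∀ a ∈ g.deps, a < i

theorem lev_input {k : ℕ} {l : List (Gate k)} (x : Fin k → Bool) {i : ℕ} {j : Fin k}
    (hl : l[i]? = some (.input j)) : lev l x i = x j := by rw [lev, hl]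

theorem lev_const {k : ℕ} {l : List (Gate k)} (x : Fin k → Bool) {i : ℕ} {b : Bool}
    (hl : l[i]? = some (.const b)) : lev l x i = b := by rw [lev, hl]

theorem lev_not {k : ℕ} {l : List (Gate k)} (x : Fin k → Bool) {i a : ℕ}
    (hl : l[i]? = some (.not a)) (ha : a < i) : lev l x i = !(lev l x a) := by
  rw [lev, hl]
  show (if _ : a < i then !(lev l x a) else false) = _
  rw [dif_pos ha]

theorem lev_and {k : ℕ} {l : List (Gate k)} (x : Fin k → Bool) {i a b : ℕ}
    (hl : l[i]? = some (.and a b)) (ha : a < i) (hb : b < i) :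
    lev l x i = (lev l x a && lev l x b) := by
  rw [lev, hl]
  show ((if _ : a < i then lev l x a else false) && (if _ : b < i then lev l x b else false)) = _
  rw [dif_pos ha, dif_pos hb]

theorem lev_or {k : ℕ} {l : List (Gate k)} (x : Fin k → Bool) {i a b : ℕ}
    (hl : l[i]? = some (.or a b)) (ha : a < i) (hb : b < i) :
    lev l x i = (lev l x a || lev l x b) := by
  rw [lev, hl]
  show ((if _ : a < i then lev l x a else false) || (if _ : b < i then lev l x b else false)) = _
  rw [dif_pos ha, dif_pos hb]

theorem lev_none {k : ℕ} {l : List (Gate k)} (x : Fin k → Bool) {i : ℕ}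
    (hl : l[i]? = none) : lev l x i = false := by rw [lev, hl]

def ofList {k : ℕ} (l : List (Gate k)) (hl : 0 < l.length) (hw : wfL l) : Circuit k where
  size := l.length
  gates := fun i => l[i]
  out := ⟨l.length - 1, by omega⟩
  wf := fun i j hj => hw i l[i] (List.getElem?_eq_getElem i.isLt) j hj

theorem ofList_evalGate {k : ℕ} (l : List (Gate k)) (hl : 0 < l.length) (hw : wfL l)
    (x : Fin k → Bool) : ∀ i (h : i < l.length),
      (ofList l hl hw).evalGate x i h = lev l x i := by
  intro i
  induction i using Nat.strong_induction_on with
  | _ i IH =>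
    intro h
    refine (evalGate_def (ofList l hl hw) x i h).trans ?_
    have hget : l[i]? = some l[i] := List.getElem?_eq_getElem h
    have hg : (ofList l hl hw).gates ⟨i, h⟩ = l[i] := rfl
    have hsize : (ofList l hl hw).size = l.length := rfl
    cases hgate : l[i] with
    | input j => rw [hg, hgate, lev_input x (hgate ▸ hget)]
    | const b => rw [hg, hgate, lev_const x (hgate ▸ hget)]
    | not a =>
        have ha : a < i := hw i _ (hgate ▸ hget) a (by simp [Gate.deps])
        rw [hg, hgate, lev_not x (hgate ▸ hget) ha]
        show (!evalGateD (ofList l hl hw) x a) = _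
        rw [evalGateD_eq _ x (show a < (ofList l hl hw).size from ha.trans h),
          IH a ha (ha.trans h)]
    | and a b =>
        have ha : a < i := hw i _ (hgate ▸ hget) a (by simp [Gate.deps])
        have hb : b < i := hw i _ (hgate ▸ hget) b (by simp [Gate.deps])
        rw [hg, hgate, lev_and x (hgate ▸ hget) ha hb]
        show (evalGateD (ofList l hl hw) x a && evalGateD (ofList l hl hw) x b) = _
        rw [evalGateD_eq _ x (show a < (ofList l hl hw).size from ha.trans h),
          evalGateD_eq _ x (show b < (ofList l hl hw).size from hb.trans h),
          IH a ha (ha.trans h), IH b hb (hb.trans h)]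
    | or a b =>
        have ha : a < i := hw i _ (hgate ▸ hget) a (by simp [Gate.deps])
        have hb : b < i := hw i _ (hgate ▸ hget) b (by simp [Gate.deps])
        rw [hg, hgate, lev_or x (hgate ▸ hget) ha hb]
        show (evalGateD (ofList l hl hw) x a || evalGateD (ofList l hl hw) x b) = _
        rw [evalGateD_eq _ x (show a < (ofList l hl hw).size from ha.trans h),
          evalGateD_eq _ x (show b < (ofList l hl hw).size from hb.trans h),
          IH a ha (ha.trans h), IH b hb (hb.trans h)]

def gl {k : ℕ} : DTree k → List (Gate k)
  | .leaf b => [.const b]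
  | .node i t0 t1 =>
      gl t0 ++ (gl t1).map (gshift (gl t0).length) ++
        [.input i,
         .not ((gl t0).length + (gl t1).length),
         .and ((gl t0).length + (gl t1).length) ((gl t0).length + (gl t1).length - 1),
         .and ((gl t0).length + (gl t1).length + 1) ((gl t0).length - 1),
         .or ((gl t0).length + (gl t1).length + 2) ((gl t0).length + (gl t1).length + 3)]

theorem gl_pos {k : ℕ} (t : DTree k) : 0 < (gl t).length := by
  cases t <;> simp [gl]

theorem gshift_deps {k : ℕ} (s : ℕ) (g : Gate k) :
    (gshift s g).deps = g.deps.map (s + ·) := by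
  cases g <;> simp [gshift, Gate.deps]

theorem gl_wf {k : ℕ} (t : DTree k) : wfL (gl t) := by
  induction t with
  | leaf b =>
      intro i g hg a ha
      cases i with
      | zero =>
          simp only [gl, List.getElem?_cons_zero, Option.some.injEq] at hg
          subst hg
          simp [Gate.deps] at ha
      | succ i => simp [gl] at hg
  | node q t0 t1 ih0 ih1 =>
      intro i g hg a ha
      by_cases h0 : i < (gl t0).length
      · simp only [gl] at hg
        rw [List.getElem?_append_left (by simp; omega), List.getElem?_append_left h0] at hg
        exact ih0 i g hg a ha
      · by_cases h1 : i < (gl t0).length + (gl t1).length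
        · simp only [gl] at hg
          rw [List.getElem?_append_left (by simp; omega),
            List.getElem?_append_right (by omega), List.getElem?_map] at hg
          cases hl1 : (gl t1)[i - (gl t0).length]? with
          | none => rw [hl1] at hg; simp at hg
          | some g' =>
              rw [hl1] at hg
              simp only [Option.map_some, Option.some.injEq] at hg
              subst hg
              rw [gshift_deps] at ha
              simp only [List.mem_map] at ha
              obtain ⟨a', ha', rfl⟩ := ha
              have := ih1 _ g' hl1 a' ha'
              omega
        · obtain ⟨j, rfl⟩ : ∃ j, i = (gl t0).length + (gl t1).length + j :=
            ⟨i - ((gl t0).length + (gl t1).length), by omega⟩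
          simp only [gl] at hg
          have hlen : ((gl t0) ++ (gl t1).map (gshift (gl t0).length)).length
              = (gl t0).length + (gl t1).length := by simp
          rw [List.getElem?_append_right (by omega)] at hg
          have hidx : (gl t0).length + (gl t1).length + j
              - ((gl t0) ++ (gl t1).map (gshift (gl t0).length)).length = j := by
            omega
          rw [hidx] at hg
          rcases j with _ | _ | _ | _ | _ | j
          · simp only [List.getElem?_cons_zero, Option.some.injEq] at hg
            subst hg
            simp [Gate.deps] at ha
          · simp only [List.getElem?_cons_succ, List.getElem?_cons_zero,
              Option.some.injEq] at hg
            subst hg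
            simp [Gate.deps] at ha
            omega
          · simp only [List.getElem?_cons_succ, List.getElem?_cons_zero,
              Option.some.injEq] at hg
            subst hg
            simp [Gate.deps] at ha
            rcases ha with rfl | rfl <;> omega
          · simp only [List.getElem?_cons_succ, List.getElem?_cons_zero,
              Option.some.injEq] at hg
            subst hg
            simp [Gate.deps] at ha
            rcases ha with rfl | rfl <;> omega
          · simp only [List.getElem?_cons_succ, List.getElem?_cons_zero,
              Option.some.injEq] at hg
            subst hg
            simp [Gate.deps] at ha
            rcases ha with rfl | rfl <;> omega
          · simp only [List.getElem?_cons_succ, List.getElem?_nil] at hg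
            exact absurd hg (by simp)

theorem lev_append {k : ℕ} (l l' : List (Gate k)) (x : Fin k → Bool) (hw : wfL l) :
    ∀ i, i < l.length → lev (l ++ l') x i = lev l x i := by
  intro i
  induction i using Nat.strong_induction_on with
  | _ i IH =>
    intro h
    have hget : l[i]? = some l[i] := List.getElem?_eq_getElem h
    have hget' : (l ++ l')[i]? = some l[i] := by
      rw [List.getElem?_append_left h]; exact hget
    cases hgate : l[i] with
    | input j => rw [lev_input x (hgate ▸ hget'), lev_input x (hgate ▸ hget)]
    | const b => rw [lev_const x (hgate ▸ hget'), lev_const x (hgate ▸ hget)]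
    | not a =>
        have ha : a < i := hw i _ hget a (by rw [hgate]; simp [Gate.deps])
        rw [lev_not x (hgate ▸ hget') ha, lev_not x (hgate ▸ hget) ha,
          IH a ha (ha.trans h)]
    | and a b =>
        have ha : a < i := hw i _ hget a (by rw [hgate]; simp [Gate.deps])
        have hb : b < i := hw i _ hget b (by rw [hgate]; simp [Gate.deps])
        rw [lev_and x (hgate ▸ hget') ha hb, lev_and x (hgate ▸ hget) ha hb,
          IH a ha (ha.trans h), IH b hb (hb.trans h)]
    | or a b =>
        have ha : a < i := hw i _ hget a (by rw [hgate]; simp [Gate.deps])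
        have hb : b < i := hw i _ hget b (by rw [hgate]; simp [Gate.deps])
        rw [lev_or x (hgate ▸ hget') ha hb, lev_or x (hgate ▸ hget) ha hb,
          IH a ha (ha.trans h), IH b hb (hb.trans h)]

theorem lev_shift {k : ℕ} (l0 l1 rest : List (Gate k)) (x : Fin k → Bool)
    (hw : wfL l1) : ∀ i, i < l1.length →
      lev (l0 ++ l1.map (gshift l0.length) ++ rest) x (l0.length + i) = lev l1 x i := by
  intro i
  induction i using Nat.strong_induction_on with
  | _ i IH =>
    intro h
    have hget : l1[i]? = some l1[i] := List.getElem?_eq_getElem h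
    have hgetL : (l0 ++ l1.map (gshift l0.length) ++ rest)[l0.length + i]?
        = some (gshift l0.length l1[i]) := by
      rw [List.getElem?_append_left (by simp; omega), List.getElem?_append_right (by omega),
        List.getElem?_map]
      simp [hget]
    cases hgate : l1[i] with
    | input j =>
        rw [hgate] at hgetL
        rw [lev_input x hgetL, lev_input x (hgate ▸ hget)]
    | const b =>
        rw [hgate] at hgetL
        rw [lev_const x hgetL, lev_const x (hgate ▸ hget)]
    | not a =>
        have ha : a < i := hw i _ hget a (by rw [hgate]; simp [Gate.deps])
        rw [hgate] at hgetL
        rw [lev_not x hgetL (by omega : l0.length + a < l0.length + i),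
          lev_not x (hgate ▸ hget) ha, IH a ha (ha.trans h)]
    | and a b =>
        have ha : a < i := hw i _ hget a (by rw [hgate]; simp [Gate.deps])
        have hb : b < i := hw i _ hget b (by rw [hgate]; simp [Gate.deps])
        rw [hgate] at hgetL
        rw [lev_and x hgetL (by omega : l0.length + a < l0.length + i)
            (by omega : l0.length + b < l0.length + i),
          lev_and x (hgate ▸ hget) ha hb, IH a ha (ha.trans h), IH b hb (hb.trans h)]
    | or a b =>
        have ha : a < i := hw i _ hget a (by rw [hgate]; simp [Gate.deps])
        have hb : b < i := hw i _ hget b (by rw [hgate]; simp [Gate.deps])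
        rw [hgate] at hgetL
        rw [lev_or x hgetL (by omega : l0.length + a < l0.length + i)
            (by omega : l0.length + b < l0.length + i),
          lev_or x (hgate ▸ hget) ha hb, IH a ha (ha.trans h), IH b hb (hb.trans h)]

theorem lev_gl {k : ℕ} (t : DTree k) (x : Fin k → Bool) :
    lev (gl t) x ((gl t).length - 1) = t.eval x := by
  induction t with
  | leaf b => exact lev_const x (by simp [gl, DTree.eval])
  | node q t0 t1 ih0 ih1 =>
      have p0 := gl_pos t0
      have p1 := gl_pos t1
      set s0 := (gl t0).length with hs0
      set s1 := (gl t1).length with hs1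
      have hlen2 : ((gl t0) ++ (gl t1).map (gshift s0)).length = s0 + s1 := by
          rw [List.length_append, List.length_map]
      have tg : ∀ (j : ℕ) (g : Gate k),
          ([.input q, .not (s0+s1), .and (s0+s1) (s0+s1-1), .and (s0+s1+1) (s0-1),
            .or (s0+s1+2) (s0+s1+3)] : List (Gate k))[j]? = some g →
          (gl (DTree.node q t0 t1))[s0+s1+j]? = some g := by
        intro j g hj
        show ((gl t0) ++ (gl t1).map (gshift s0) ++ _)[s0+s1+j]? = some g
        rw [List.getElem?_append_right (by omega)]
        have : s0 + s1 + j - ((gl t0) ++ (gl t1).map (gshift s0)).length = j := by omega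
        rw [this]
        exact hj
      have g0 := tg 0 (.input q) rfl
      have g1 := tg 1 (.not (s0+s1)) rfl
      have g2 := tg 2 (.and (s0+s1) (s0+s1-1)) rfl
      have g3 := tg 3 (.and (s0+s1+1) (s0-1)) rfl
      have g4 := tg 4 (.or (s0+s1+2) (s0+s1+3)) rfl
      rw [Nat.add_zero] at g0
      have hLlen : (gl (DTree.node q t0 t1)).length = s0 + s1 + 5 := by
        show ((gl t0) ++ (gl t1).map (gshift s0) ++ _).length = _
        simp
        omega
      have hidx : (gl (DTree.node q t0 t1)).length - 1 = s0 + s1 + 4 := by omega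
      rw [hidx]
      have e_in : lev (gl (DTree.node q t0 t1)) x (s0+s1) = x q := lev_input x g0
      have e_not : lev (gl (DTree.node q t0 t1)) x (s0+s1+1) = !(x q) := by
        rw [lev_not x g1 (by omega), e_in]
      have e_t1 : lev (gl (DTree.node q t0 t1)) x (s0+s1-1) = t1.eval x := by
        have h1 : s0 + s1 - 1 = s0 + (s1 - 1) := by omega
        rw [h1]
        show lev ((gl t0) ++ (gl t1).map (gshift (gl t0).length) ++ _) x _ = _
        rw [lev_shift _ _ _ x (gl_wf t1) (s1-1) (by omega)]
        exact ih1
      have e_t0 : lev (gl (DTree.node q t0 t1)) x (s0-1) = t0.eval x := by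
        show lev ((gl t0) ++ (gl t1).map (gshift (gl t0).length) ++ _) x _ = _
        rw [List.append_assoc, lev_append _ _ x (gl_wf t0) (s0-1) (by omega)]
        exact ih0
      rw [lev_or x g4 (by omega) (by omega), lev_and x g2 (by omega) (by omega),
        lev_and x g3 (by omega) (by omega), e_in, e_not, e_t1, e_t0]
      cases hx : x q <;> simp [DTree.eval, hx]

def treeCircuit {k : ℕ} (t : DTree k) : Circuit k :=
  ofList (gl t) (gl_pos t) (gl_wf t)

theorem treeCircuit_computes {k : ℕ} (t : DTree k) :
    (treeCircuit t).Computes t.eval := by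
  intro x
  show (ofList (gl t) (gl_pos t) (gl_wf t)).evalGate x ((gl t).length - 1) _ = _
  exact (ofList_evalGate _ _ _ x _ _).trans (lev_gl t x)

end Stmt18

open Stmt18 in
/-- For every Boolean function `f` with decision tree complexity
`D(f) ≤ n`, there exists `h ∈ H_n` with `EC(f) ≤ EC(h)`. -/
theorem stmt18 (n m : ℕ) (f : (Fin m → Bool) → Bool) (hD : Dcomp f ≤ n) :
    ∃ h : (Fin (2 ^ n - 1) → Bool) → Bool, MemH n h ∧ EC f ≤ EC h := by
  classical
  -- extract an optimal decision tree for `f`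
  have hne : {k | ∃ T : DTree m, (∀ x, T.eval x = f x) ∧ T.depth = k}.Nonempty := by
    obtain ⟨T, hT, hd⟩ := exists_tree f
    exact ⟨m, T, hT, hd⟩
  obtain ⟨T, hTeval, hTdepth⟩ := Nat.sInf_mem hne
  have hTd : T.depth ≤ n := by
    rw [hTdepth]; exact hD
  -- prune it and build the padded perfect tree
  set T' := prune T with hT'
  have hT'eval : ∀ x, T'.eval x = f x := fun x => (prune_eval T x).trans (hTeval x)
  have hT'd : T'.depth ≤ n := (prune_depth T).trans hTd
  have hInv : Inv n n 0 := ⟨le_refl n, by simp⟩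
  set U := mk n n 0 T' with hU
  have hperf : U.Perfect n := mk_perfect n 0 T' hInv
  have hnodup : U.queries.Nodup := nodup_mk n 0 T' hInv
  have hcorrect : ∀ x, U.eval (pii T' n x) = f x := by
    intro x
    rw [mk_eval T' x n 0 T' hInv (navigate_zero T') hT'd]
    exact hT'eval x
  refine ⟨U.eval, ⟨⟨U, hperf, hnodup, fun _ => rfl⟩, ?_⟩, ?_⟩
  · -- dependence on every variable
    intro j
    obtain ⟨y, hy⟩ := mk_dep n 0 T' hInv hT'd (prune_good T) j
      (mem_queries_of_perfect hperf hnodup j)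
    exact ⟨y, hy⟩
  · -- energy comparison
    have hSh : {k | ∃ C : Circuit (2 ^ n - 1), C.Computes U.eval ∧ C.energy = k}.Nonempty :=
      ⟨(treeCircuit U).energy, treeCircuit U, treeCircuit_computes U, rfl⟩
    obtain ⟨C, hCcomp, hCE⟩ := Nat.sInf_mem hSh
    have hC'comp : (cpull C T').Computes f := by
      intro x
      rw [output_pull, hCcomp (pii T' n x)]
      exact hcorrect x
    calc EC f ≤ (cpull C T').energy := Nat.sInf_le ⟨cpull C T', hC'comp, rfl⟩
      _ ≤ C.energy := energy_pull_le C T'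
      _ = EC U.eval := hCE
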